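/- Let F be a 3-CNF formula with m clauses and let F′ be its GJS transformation, which has 10m clauses. Then F is satisfiable (some assignment satisfies all m clauses of F) if and only if maxsat(F′) ≥ 7m, i.e., if and only if 7/10 of the clauses of F′ can be simultaneously satisfied. -/

import Mathlib

/-- A literal: a variable together with a polarity. -/
def Lit (V : Type*) := V × Bool

/-- A literal evaluates to `σ v` if positive and `¬ σ v` if negative. -/
def litEval {V : Type*} (σ : V → Bool) (l : Lit V) : Bool :=
  if l.2 then σ l.1 else !(σ l.1)

/-- A 3-clause: a triple of literals. -/
def Clause3 (V : Type*) := Lit V × Lit V × Lit V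

/-- A 3-clause is satisfied if at least one of its literals evaluates to true. -/
def c3Eval {V : Type*} (σ : V → Bool) (c : Clause3 V) : Bool :=
  litEval σ c.1 || litEval σ c.2.1 || litEval σ c.2.2

/-- A 2-clause: a pair of literals (a unit clause is represented by a repeated literal). -/
def Clause2 (V : Type*) := Lit V × Lit V

def c2Eval {V : Type*} (σ : V → Bool) (c : Clause2 V) : Bool :=
  litEval σ c.1 || litEval σ c.2

/-- Number of clauses of the 3-CNF formula `F` satisfied by `σ`. -/
def sat3 {V : Type*} (F : List (Clause3 V)) (σ : V → Bool) : ℕ :=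
  (F.filter (fun c => c3Eval σ c)).length

/-- Number of clauses of the 2-CNF formula `F` satisfied by `σ`. -/
def sat2 {V : Type*} (F : List (Clause2 V)) (σ : V → Bool) : ℕ :=
  (F.filter (fun c => c2Eval σ c)).length

/-- The maximum number of simultaneously satisfiable clauses of a 3-CNF formula. -/
def maxsat3 {V : Type*} [Fintype V] [DecidableEq V] (F : List (Clause3 V)) : ℕ :=
  Finset.univ.sup (fun σ : V → Bool => sat3 F σ)

/-- The maximum number of simultaneously satisfiable clauses of a 2-CNF formula. -/
def maxsat2 {V : Type*} [Fintype V] [DecidableEq V] (F : List (Clause2 V)) : ℕ :=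
  Finset.univ.sup (fun σ : V → Bool => sat2 F σ)

def negLit {V : Type*} (l : Lit V) : Lit V := (l.1, !l.2)

/-- The ten GJS gadget 2-clauses for the `i`-th 3-clause `c = (ℓ₁ ∨ ℓ₂ ∨ ℓ₃)`:
`(ℓ₁), (ℓ₂), (ℓ₃), (yᵢ), (¬ℓ₁∨¬ℓ₂), (¬ℓ₂∨¬ℓ₃), (¬ℓ₁∨¬ℓ₃), (ℓ₁∨¬yᵢ), (ℓ₂∨¬yᵢ), (ℓ₃∨¬yᵢ)`. -/
def gjsGadget {V : Type*} {m : ℕ} (i : Fin m) (c : Clause3 V) :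
    List (Clause2 (V ⊕ Fin m)) :=
  let l₁ : Lit (V ⊕ Fin m) := (Sum.inl c.1.1, c.1.2)
  let l₂ : Lit (V ⊕ Fin m) := (Sum.inl c.2.1.1, c.2.1.2)
  let l₃ : Lit (V ⊕ Fin m) := (Sum.inl c.2.2.1, c.2.2.2)
  let y : Lit (V ⊕ Fin m) := (Sum.inr i, true)
  [(l₁, l₁), (l₂, l₂), (l₃, l₃), (y, y),
   (negLit l₁, negLit l₂), (negLit l₂, negLit l₃), (negLit l₁, negLit l₃),
   (l₁, negLit y), (l₂, negLit y), (l₃, negLit y)]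

/-- The GJS transformation of a 3-CNF formula: replace each clause by its ten gadget
2-clauses, over the original variables plus one fresh variable per clause. -/
def gjs {V : Type*} (F : List (Clause3 V)) : List (Clause2 (V ⊕ Fin F.length)) :=
  (List.ofFn (fun i : Fin F.length => gjsGadget i (F.get i))).flatten


def gcount (b1 b2 b3 y : Bool) : ℕ :=
  ([b1, b2, b3, y, !b1 || !b2, !b2 || !b3, !b1 || !b3,
     b1 || !y, b2 || !y, b3 || !y].filter id).length

lemma gcount_le (b1 b2 b3 y : Bool) : gcount b1 b2 b3 y ≤ 7 := by
  revert b1 b2 b3 y; decide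

lemma gcount_le6 (b1 b2 b3 y : Bool) (h : (b1 || b2 || b3) = false) :
    gcount b1 b2 b3 y ≤ 6 := by
  revert b1 b2 b3 y; decide

lemma gcount_eq7 (b1 b2 b3 : Bool) (h : (b1 || b2 || b3) = true) :
    gcount b1 b2 b3 (b1 && b2 && b3) = 7 := by
  revert b1 b2 b3; decide

lemma sat2_gadget {V : Type*} {m : ℕ} (i : Fin m) (c : Clause3 V)
    (τ : (V ⊕ Fin m) → Bool) :
    sat2 (gjsGadget i c) τ =
      gcount (litEval (τ ∘ Sum.inl) c.1) (litEval (τ ∘ Sum.inl) c.2.1)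
        (litEval (τ ∘ Sum.inl) c.2.2) (τ (Sum.inr i)) := by
  obtain ⟨⟨v1, p1⟩, ⟨v2, p2⟩, ⟨v3, p3⟩⟩ := c
  cases h1 : τ (Sum.inl v1) <;> cases h2 : τ (Sum.inl v2) <;> cases h3 : τ (Sum.inl v3) <;>
    cases hy : τ (Sum.inr i) <;> cases p1 <;> cases p2 <;> cases p3 <;>
      simp [sat2, gjsGadget, gcount, c2Eval, litEval, negLit, h1, h2, h3, hy, List.filter] <;> rfl

lemma sat2_gjs {V : Type*} (F : List (Clause3 V)) (τ : (V ⊕ Fin F.length) → Bool) :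
    sat2 (gjs F) τ = ∑ i : Fin F.length, sat2 (gjsGadget i (F.get i)) τ := by
  simp [sat2, gjs, List.filter_flatten, List.length_flatten, List.map_ofFn,
    List.sum_ofFn, Function.comp]


theorem gjs_sat_iff {V : Type*} [Fintype V] [DecidableEq V]
    (F : List (Clause3 V)) :
    (gjs F).length = 10 * F.length ∧
    ((∃ σ : V → Bool, ∀ c ∈ F, c3Eval σ c = true) ↔
      7 * F.length ≤ maxsat2 (gjs F)) := by
  have hlen : (gjs F).length = 10 * F.length := by
    have hg : ∀ (i : Fin F.length) (c : Clause3 V), (gjsGadget i c).length = 10 := fun _ _ => rfl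
    simp [gjs, List.length_flatten, List.map_ofFn, Function.comp, hg,
      List.sum_ofFn, Finset.sum_const, mul_comm]
  refine ⟨hlen, ?_, ?_⟩
  · rintro ⟨σ, hσ⟩
    set τ : (V ⊕ Fin F.length) → Bool := Sum.elim σ
      (fun j => litEval σ (F.get j).1 && litEval σ (F.get j).2.1 && litEval σ (F.get j).2.2)
      with hτ
    have hτl : τ ∘ Sum.inl = σ := rfl
    have hval : sat2 (gjs F) τ = 7 * F.length := by
      rw [sat2_gjs]
      have : ∀ i : Fin F.length, sat2 (gjsGadget i (F.get i)) τ = 7 := by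
        intro i
        rw [sat2_gadget, hτl]
        exact gcount_eq7 _ _ _ (hσ _ (List.get_mem F i))
      simp only [List.get_eq_getElem] at this
      simp [this, Finset.sum_const, mul_comm]
    calc 7 * F.length = sat2 (gjs F) τ := hval.symm
      _ ≤ maxsat2 (gjs F) := Finset.le_sup (Finset.mem_univ τ)
  · intro h
    obtain ⟨τ, -, hτ⟩ := Finset.exists_mem_eq_sup (Finset.univ)
      Finset.univ_nonempty (fun σ : (V ⊕ Fin F.length) → Bool => sat2 (gjs F) σ)
    have hge : 7 * F.length ≤ sat2 (gjs F) τ := by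
      rw [← hτ]; exact h
    refine ⟨τ ∘ Sum.inl, ?_⟩
    by_contra hc
    push_neg at hc
    obtain ⟨c, hcF, hcbad⟩ := hc
    obtain ⟨j, hj, rfl⟩ := List.mem_iff_getElem.mp hcF
    have hlt : sat2 (gjs F) τ < 7 * F.length := by
      rw [sat2_gjs]
      calc ∑ i : Fin F.length, sat2 (gjsGadget i (F.get i)) τ
          < ∑ _i : Fin F.length, 7 := by
            refine Finset.sum_lt_sum (fun i _ => by rw [sat2_gadget]; exact gcount_le _ _ _ _)
              ⟨⟨j, hj⟩, Finset.mem_univ _, ?_⟩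
            rw [sat2_gadget]
            have h6 : gcount (litEval (τ ∘ Sum.inl) (F.get ⟨j, hj⟩).1)
                (litEval (τ ∘ Sum.inl) (F.get ⟨j, hj⟩).2.1)
                (litEval (τ ∘ Sum.inl) (F.get ⟨j, hj⟩).2.2) (τ (Sum.inr ⟨j, hj⟩)) ≤ 6 := by
              apply gcount_le6
              have := hcbad
              simp only [c3Eval] at this
              simpa [List.get_eq_getElem] using Bool.eq_false_iff.mpr this
            omega
        _ = 7 * F.length := by simp [Finset.sum_const, mul_comm]
    omega
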